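/- For every d ≥ 1, s_4(Z_2^d) ≤ sqrt(2^{d+1} − 7/4) + 7/2. Equivalently: every multiset of elements of Z_2^d whose size is at least sqrt(2^{d+1} − 7/4) + 7/2 contains a sub-multiset of size 4 whose elements sum to zero. -/

import Mathlib

/-- For every `d ≥ 1`, `s₄(ℤ₂^d) ≤ √(2^(d+1) − 7/4) + 7/2`: every multiset of
elements of `ℤ₂^d` whose size is at least `√(2^(d+1) − 7/4) + 7/2` contains a
sub-multiset of size `4` whose elements sum to zero. -/
theorem egz_four_upper_bound (d : ℕ) (hd : 1 ≤ d) :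
    ∀ S : Multiset (Fin d → ZMod 2),
      Real.sqrt ((2 : ℝ) ^ (d + 1) - 7 / 4) + 7 / 2 ≤ (Multiset.card S : ℝ) →
      ∃ T ≤ S, Multiset.card T = 4 ∧ T.sum = 0 := by
  classical
  intro S hS
  have hxx : ∀ x : Fin d → ZMod 2, x + x = 0 := fun x => by
    ext i; exact CharTwo.add_self_eq_zero (x i)
  by_cases hA : ∃ a, 4 ≤ S.count a
  · obtain ⟨a, ha⟩ := hA
    refine ⟨Multiset.replicate 4 a, Multiset.le_count_iff_replicate_le.1 ha, by simp, ?_⟩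
    rw [Multiset.sum_replicate, show (4 : ℕ) = 2 + 2 from rfl, add_nsmul, two_nsmul,
      hxx a, add_zero]
  by_cases hB : ∃ a b, a ≠ b ∧ 2 ≤ S.count a ∧ 2 ≤ S.count b
  · obtain ⟨a, b, hab, ha, hb⟩ := hB
    refine ⟨Multiset.replicate 2 a + Multiset.replicate 2 b, ?_, by simp, ?_⟩
    · rw [Multiset.le_iff_count]
      intro x
      rw [Multiset.count_add, Multiset.count_replicate, Multiset.count_replicate]
      split_ifs with h1 h2 h2
      · exact absurd (h1.trans h2.symm) hab
      · subst h1; omega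
      · subst h2; omega
      · omega
    · rw [Multiset.sum_add, Multiset.sum_replicate, Multiset.sum_replicate, two_nsmul,
        two_nsmul, hxx a, hxx b, add_zero]
  -- main case: at most one repeated element, with multiplicity ≤ 3
  set F : Finset (Fin d → ZMod 2) := S.toFinset with hF
  set k : ℕ := F.card with hk
  have hcount3 : ∀ a, S.count a ≤ 3 := fun a => by
    by_contra h; exact hA ⟨a, by omega⟩
  have hcard : Multiset.card S ≤ k + 2 := by
    by_cases h2 : ∃ a, 2 ≤ S.count a
    · obtain ⟨a, ha2⟩ := h2
      have h1 : ∀ x, x ≠ a → S.count x ≤ 1 := fun x hx => by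
        by_contra h; exact hB ⟨x, a, hx, by omega, ha2⟩
      calc Multiset.card S = ∑ x ∈ F, S.count x := (Multiset.toFinset_sum_count_eq S).symm
        _ ≤ ∑ x ∈ F, (1 + if x = a then 2 else 0) := Finset.sum_le_sum (fun x _ => by
            by_cases hx : x = a
            · subst hx; simpa using hcount3 x
            · simp [hx, h1 x hx])
        _ = k + ∑ x ∈ F, (if x = a then 2 else 0) := by
            rw [Finset.sum_add_distrib, Finset.sum_const, smul_eq_mul, mul_one]
        _ ≤ k + 2 := by
            rw [Finset.sum_ite_eq' F a (fun _ => 2)]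
            split_ifs <;> omega
    · push_neg at h2
      calc Multiset.card S = ∑ x ∈ F, S.count x := (Multiset.toFinset_sum_count_eq S).symm
        _ ≤ ∑ x ∈ F, 1 := Finset.sum_le_sum (fun x _ => by
            have := h2 x; omega)
        _ ≤ k + 2 := by simp; omega
  -- numeric bound
  set s : ℝ := Real.sqrt ((2 : ℝ) ^ (d + 1) - 7 / 4) with hs_def
  have hpow : (4 : ℝ) ≤ 2 ^ (d + 1) := by
    calc (4 : ℝ) = 2 ^ 2 := by norm_num
      _ ≤ 2 ^ (d + 1) := pow_le_pow_right₀ one_le_two (by omega)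
  have hsq : s ^ 2 = 2 ^ (d + 1) - 7 / 4 := Real.sq_sqrt (by linarith)
  have hs0 : 0 ≤ s := Real.sqrt_nonneg _
  have hs32 : 3 / 2 ≤ s := by nlinarith
  have hkR : s + 3 / 2 ≤ (k : ℝ) := by
    have h1 : (Multiset.card S : ℝ) ≤ (k : ℝ) + 2 := by exact_mod_cast hcard
    linarith
  have hk3 : 3 ≤ k := by exact_mod_cast (by linarith : (3 : ℝ) ≤ (k : ℝ))
  have h2d : (1 : ℕ) ≤ 2 ^ d := Nat.one_le_two_pow
  have hkey : (2 ^ d - 1) * 2 < k * (k - 1) := by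
    have hcast1 : (((2 ^ d - 1) * 2 : ℕ) : ℝ) = 2 ^ (d + 1) - 2 := by
      rw [Nat.cast_mul, Nat.cast_sub h2d]
      push_cast
      ring
    have hcast2 : ((k * (k - 1) : ℕ) : ℝ) = (k : ℝ) * ((k : ℝ) - 1) := by
      rw [Nat.cast_mul, Nat.cast_sub (by omega : 1 ≤ k)]
      push_cast
      ring
    rw [← Nat.cast_lt (α := ℝ), hcast1, hcast2]
    nlinarith
  -- pigeonhole on pairwise sums
  set t : Finset (Fin d → ZMod 2) := Finset.univ.erase 0 with ht_def
  have ht : t.card = 2 ^ d - 1 := by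
    rw [Finset.card_erase_of_mem (Finset.mem_univ _), Finset.card_univ]
    simp
  have hmaps : ∀ p ∈ F.offDiag, p.1 + p.2 ∈ t := by
    rintro ⟨x, y⟩ hp
    rw [Finset.mem_offDiag] at hp
    simp only [ht_def, Finset.mem_erase, Finset.mem_univ, and_true]
    intro h
    apply hp.2.2
    have h1 : x = -y := eq_neg_of_add_eq_zero_left h
    have h2 : -y = y := neg_eq_of_add_eq_zero_left (hxx y)
    exact h1.trans h2
  have hcardOff : t.card * 2 < F.offDiag.card := by
    rw [ht, Finset.offDiag_card]
    have hmul : k * k - k = k * (k - 1) := by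
      rw [Nat.mul_sub, mul_one]
    rw [← hk, hmul]
    exact hkey
  obtain ⟨y, hyt, hy⟩ := Finset.exists_lt_card_fiber_of_mul_lt_card_of_maps_to hmaps hcardOff
  set Φ := F.offDiag.filter (fun p => p.1 + p.2 = y) with hΦ
  have hΦ3 : 3 ≤ Φ.card := hy
  obtain ⟨p, hp⟩ := Finset.card_pos.mp (by omega : 0 < Φ.card)
  have hqex : ∃ q ∈ Φ, q ≠ p ∧ q ≠ p.swap := by
    have h1 : Φ.card ≤ (Φ \ {p, p.swap}).card + ({p, p.swap} : Finset _).card :=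
      Finset.card_le_card_sdiff_add_card
    have h2 : ({p, p.swap} : Finset _).card ≤ 2 :=
      (Finset.card_insert_le _ _).trans (by simp)
    obtain ⟨q, hq⟩ := Finset.card_pos.mp (by omega : 0 < (Φ \ {p, p.swap}).card)
    rw [Finset.mem_sdiff, Finset.mem_insert, Finset.mem_singleton] at hq
    exact ⟨q, hq.1, fun h => hq.2 (Or.inl h), fun h => hq.2 (Or.inr h)⟩
  obtain ⟨q, hqΦ, hqp, hqps⟩ := hqex
  obtain ⟨a, b⟩ := p
  obtain ⟨c, e⟩ := q
  simp only [hΦ, Finset.mem_filter, Finset.mem_offDiag] at hp hqΦ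
  obtain ⟨⟨haF, hbF, hab⟩, hpy⟩ := hp
  obtain ⟨⟨hcF, heF, hce⟩, hqy⟩ := hqΦ
  have heq : a + b = c + e := hpy.trans hqy.symm
  have hne1 : (c, e) ≠ (a, b) := hqp
  have hne2 : (c, e) ≠ (b, a) := hqps
  have hac : a ≠ c := by
    rintro rfl
    exact hne1 (by rw [add_left_cancel heq.symm])
  have hae : a ≠ e := by
    rintro rfl
    apply hne2
    have : a + b = a + c := by rw [heq, add_comm]
    rw [add_left_cancel this]
  have hbc : b ≠ c := by
    rintro rfl
    apply hne2
    have : b + a = b + e := by rw [← heq, add_comm]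
    rw [add_left_cancel this]
  have hbe : b ≠ e := by
    rintro rfl
    apply hne1
    have : b + a = b + c := by rw [add_comm b a, heq, add_comm]
    rw [add_left_cancel this]
  have hsubF : ({a, b, c, e} : Finset (Fin d → ZMod 2)) ⊆ F := by
    intro x hx
    simp only [Finset.mem_insert, Finset.mem_singleton] at hx
    rcases hx with rfl | rfl | rfl | rfl <;> assumption
  have hcard4 : ({a, b, c, e} : Finset (Fin d → ZMod 2)).card = 4 := by
    rw [Finset.card_insert_of_notMem (by simp [hab, hac, hae]),
      Finset.card_insert_of_notMem (by simp [hbc, hbe]),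
      Finset.card_insert_of_notMem (by simp [hce]), Finset.card_singleton]
  refine ⟨({a, b, c, e} : Finset (Fin d → ZMod 2)).val, ?_, hcard4, ?_⟩
  · calc ({a, b, c, e} : Finset (Fin d → ZMod 2)).val ≤ F.val :=
        Finset.val_le_iff.mpr hsubF
      _ = S.dedup := Multiset.toFinset_val S
      _ ≤ S := S.dedup_le
  · have hsum : ({a, b, c, e} : Finset (Fin d → ZMod 2)).val.sum
        = ∑ x ∈ ({a, b, c, e} : Finset (Fin d → ZMod 2)), x := by
      simp [Finset.sum]
    rw [hsum,
      Finset.sum_insert (by simp [hab, hac, hae]),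
      Finset.sum_insert (by simp [hbc, hbe]),
      Finset.sum_insert (by simp [hce]), Finset.sum_singleton,
      ← add_assoc, hpy, hqy]
    exact hxx y
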